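/- arXiv:math/9405217 — 2 statements merged into one kernel-verified Lean document; each statement's English description precedes it below -/
import Mathlib

section
/- Let f_n : [0,1] → ℝ be functions with continuous k-th derivatives, and suppose there exist functions f and g on [0,1] such that f_n → f uniformly and D^k f_n → g uniformly as n → ∞. Then f is k times differentiable and D^k f = g. -/
open Set Filter Polynomial Topology

private lemma polyContDiff {n : WithTop ℕ∞} (p : ℝ[X]) :
    ContDiff ℝ n fun x => p.eval x := by
  induction p using Polynomial.induction_on' with
  | add p q hp hq => simpa only [eval_add] using hp.add hq
  | monomial m a =>
      simpa only [eval_monomial, id_eq] using (contDiff_const (c := a)).mul (contDiff_id.pow m)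

private lemma polyIter (p : ℝ[X]) (m : ℕ) :
    iteratedDeriv m (fun x => p.eval x) = fun x => (derivative^[m] p).eval x := by
  induction m generalizing p with
  | zero => simp
  | succ m ih =>
      rw [iteratedDeriv_succ']
      have h : deriv (fun x => p.eval x) = fun x => (derivative p).eval x :=
        funext fun x => by rw [Polynomial.deriv]
      rw [h, ih, Function.iterate_succ_apply]

private lemma iterSub (m : ℕ) (f g : ℝ → ℝ) (hf : ContDiff ℝ m f) (hg : ContDiff ℝ m g)
    (x : ℝ) :
    iteratedDeriv m (fun y => f y - g y) x = iteratedDeriv m f x - iteratedDeriv m g x := by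
  have h : (fun y => f y - g y) = f - g := rfl
  rw [h, ← iteratedDerivWithin_univ, ← iteratedDerivWithin_univ, ← iteratedDerivWithin_univ]
  exact iteratedDerivWithin_sub (Set.mem_univ x) uniqueDiffOn_univ hf.contDiffWithinAt hg.contDiffWithinAt

private lemma iterAdd (m : ℕ) (f g : ℝ → ℝ) (hf : ContDiff ℝ m f) (hg : ContDiff ℝ m g)
    (x : ℝ) :
    iteratedDeriv m (fun y => f y + g y) x = iteratedDeriv m f x + iteratedDeriv m g x := by
  have h : (fun y => f y + g y) = f + g := rfl
  rw [h, ← iteratedDerivWithin_univ, ← iteratedDerivWithin_univ, ← iteratedDerivWithin_univ]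
  exact iteratedDerivWithin_add (Set.mem_univ x) uniqueDiffOn_univ hf.contDiffWithinAt hg.contDiffWithinAt

private lemma iterWithinEq {m : ℕ} {f : ℝ → ℝ} (hf : ContDiff ℝ m f) {x : ℝ}
    (hx : x ∈ Icc (0:ℝ) 1) :
    iteratedDerivWithin m f (Icc (0:ℝ) 1) x = iteratedDeriv m f x := by
  have h1 : HasFTaylorSeriesUpTo (m : ℕ∞) f (ftaylorSeries ℝ f) :=
    contDiff_iff_ftaylorSeries.mp (by exact_mod_cast hf)
  have h2 : HasFTaylorSeriesUpToOn (m : ℕ∞) f (ftaylorSeries ℝ f) (Icc (0:ℝ) 1) :=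
    (hasFTaylorSeriesUpToOn_univ_iff.mpr h1).mono (subset_univ _)
  have h3 := h2.eq_iteratedFDerivWithin_of_uniqueDiffOn (m := m) (by exact_mod_cast le_refl m)
    (uniqueDiffOn_Icc one_pos) hx
  rw [iteratedDerivWithin_eq_iteratedFDerivWithin, iteratedDeriv_eq_iteratedFDeriv, ← h3]
  rfl

theorem stmt4 (k : ℕ) (f g : ℝ → ℝ) (F : ℕ → ℝ → ℝ)
    (hF : ∀ n, ContDiff ℝ k (F n))
    (hconv : TendstoUniformlyOn F f atTop (Icc (0:ℝ) 1))
    (hconv' : TendstoUniformlyOn (fun n => iteratedDeriv k (F n)) g atTop (Icc (0:ℝ) 1)) :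
    ContDiffOn ℝ k f (Icc (0:ℝ) 1) ∧
      EqOn (iteratedDerivWithin k f (Icc (0:ℝ) 1)) g (Icc (0:ℝ) 1) := by
  rcases Nat.eq_zero_or_pos k with hk | hk
  · subst hk
    have hfc : ContinuousOn f (Icc (0:ℝ) 1) :=
      hconv.continuousOn (Frequently.of_forall fun n => (hF n).continuous.continuousOn)
    refine ⟨by exact_mod_cast contDiffOn_zero.mpr hfc, ?_⟩
    intro x hx
    have h1 : Tendsto (fun n => F n x) atTop (𝓝 (f x)) := hconv.tendsto_at hx
    have h2 : Tendsto (fun n => F n x) atTop (𝓝 (g x)) := by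
      simpa [iteratedDeriv_zero] using hconv'.tendsto_at hx
    simpa [iteratedDerivWithin_zero] using tendsto_nhds_unique h1 h2
  -- main case : k ≥ 1
  have hUD : UniqueDiffOn ℝ (Icc (0:ℝ) 1) := uniqueDiffOn_Icc one_pos
  set P : ℕ → ℝ[X] :=
    fun n => ∑ i ∈ Finset.range k, C (iteratedDeriv i (F n) 0 / (i.factorial : ℝ)) * X ^ i
    with hPdef
  have hPdeg : ∀ n, (P n).degree < (k : WithBot ℕ) := by
    intro n
    refine lt_of_le_of_lt (Polynomial.degree_sum_le _ _) ?_
    rw [Finset.sup_lt_iff (by exact_mod_cast WithBot.bot_lt_coe k)]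
    intro i hi
    refine lt_of_le_of_lt (Polynomial.degree_C_mul_X_pow_le _ _) ?_
    exact_mod_cast Finset.mem_range.mp hi
  have hPnat : ∀ n, (P n).natDegree < k := by
    intro n
    by_cases h0 : P n = 0
    · simpa [h0] using hk
    · exact (Polynomial.natDegree_lt_iff_degree_lt h0).mpr (by exact_mod_cast hPdeg n)
  have hPcoeff : ∀ n i, i < k →
      (P n).coeff i = iteratedDeriv i (F n) 0 / (i.factorial : ℝ) := by
    intro n i hi
    rw [hPdef]
    simp [Polynomial.finset_sum_coeff, Polynomial.coeff_C_mul, Polynomial.coeff_X_pow,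
      Finset.sum_ite_eq', Finset.mem_range.mpr hi]
  set G : ℕ → ℝ → ℝ := fun n x => F n x - (P n).eval x with hGdef
  have hGsm : ∀ n, ContDiff ℝ k (G n) := fun n => (hF n).sub (polyContDiff (P n))
  have hGiter : ∀ n (m : ℕ), m ≤ k → ∀ x,
      iteratedDeriv m (G n) x = iteratedDeriv m (F n) x - (derivative^[m] (P n)).eval x := by
    intro n m hm x
    have h := iterSub m (F n) (fun y => (P n).eval y)
      ((hF n).of_le (by exact_mod_cast hm)) (polyContDiff (P n)) x
    rw [polyIter] at h
    exact h
  have hG0 : ∀ n (m : ℕ), m < k → iteratedDeriv m (G n) 0 = 0 := by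
    intro n m hm
    rw [hGiter n m hm.le, ← Polynomial.coeff_zero_eq_eval_zero,
      Polynomial.coeff_iterate_derivative, Nat.zero_add, Nat.descFactorial_self,
      hPcoeff n m hm, nsmul_eq_mul]
    rw [mul_div_cancel₀ _ (by exact_mod_cast m.factorial_ne_zero)]
    ring
  have hGk : ∀ n, iteratedDeriv k (G n) = iteratedDeriv k (F n) := by
    intro n
    funext x
    rw [hGiter n k le_rfl x, Polynomial.iterate_derivative_eq_zero (hPnat n),
      Polynomial.eval_zero, sub_zero]
  -- key downward induction
  have key : ∀ i : ℕ, i ≤ k → ∃ h : ℝ → ℝ, ContDiff ℝ i h ∧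
      TendstoUniformlyOn (fun n => iteratedDeriv (k - i) (G n)) h atTop (Icc (0:ℝ) 1) ∧
      EqOn (iteratedDeriv i h) g (Icc (0:ℝ) 1) := by
    intro i
    induction i with
    | zero =>
      intro _
      have hgc : ContinuousOn g (Icc (0:ℝ) 1) :=
        hconv'.continuousOn (Frequently.of_forall fun n =>
          ((hF n).continuous_iteratedDeriv k le_rfl).continuousOn)
      set c : ℝ → ℝ := fun x => min 1 (max 0 x) with hc
      have hcc : Continuous c := continuous_const.min (continuous_const.max continuous_id)
      have hcm : ∀ x, c x ∈ Icc (0:ℝ) 1 :=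
        fun x => ⟨le_min zero_le_one (le_max_left 0 x), min_le_left 1 _⟩
      have hcid : ∀ x ∈ Icc (0:ℝ) 1, c x = x := by
        intro x hx
        rw [hc]
        simp only [max_eq_right hx.1, min_eq_right hx.2]
      refine ⟨fun x => g (c x), contDiff_zero.mpr (hgc.comp_continuous hcc hcm), ?_, ?_⟩
      · have h1 : TendstoUniformlyOn (fun n => iteratedDeriv k (F n)) (fun x => g (c x))
            atTop (Icc (0:ℝ) 1) :=
          hconv'.congr_right (fun x hx => by rw [hcid x hx])
        have h2 := h1.congr (F' := fun n => iteratedDeriv (k - 0) (G n))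
          (Eventually.of_forall fun n x _ => by simp only [Nat.sub_zero, hGk n])
        exact h2
      · intro x hx
        rw [iteratedDeriv_zero]
        rw [hcid x hx]
    | succ i ih =>
      intro hik
      obtain ⟨h, hsm, hun, heq⟩ := ih (Nat.le_of_succ_le hik)
      have hhc : Continuous h := hsm.continuous
      set H : ℝ → ℝ := fun x => ∫ t in (0:ℝ)..x, h t with hHdef
      have hH' : ∀ x, HasDerivAt H (h x) x :=
        fun x => (hhc.integral_hasStrictDerivAt 0 x).hasDerivAt
      have hHderiv : deriv H = h := funext fun x => (hH' x).deriv
      have hHsm : ContDiff ℝ (i + 1 : ℕ) H := by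
        rw [show ((i + 1 : ℕ) : WithTop ℕ∞) = (i : WithTop ℕ∞) + 1 from rfl]
        exact contDiff_succ_iff_deriv.mpr
          ⟨fun x => (hH' x).differentiableAt, by simp, by rw [hHderiv]; exact hsm⟩
      have hki : k - i = (k - (i + 1)) + 1 := by omega
      have hGcont : ∀ n, Continuous (iteratedDeriv (k - i) (G n)) :=
        fun n => (hGsm n).continuous_iteratedDeriv _ (by exact_mod_cast Nat.sub_le k i)
      have hrep : ∀ n, ∀ x ∈ Icc (0:ℝ) 1,
          iteratedDeriv (k - (i + 1)) (G n) x =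
            ∫ t in (0:ℝ)..x, iteratedDeriv (k - i) (G n) t := by
        intro n x _
        have hd : ∀ y, DifferentiableAt ℝ (iteratedDeriv (k - (i + 1)) (G n)) y := fun y =>
          ((hGsm n).differentiable_iteratedDeriv _
            (by exact_mod_cast (by omega : k - (i + 1) < k))) y
        have hder : deriv (iteratedDeriv (k - (i + 1)) (G n)) = iteratedDeriv (k - i) (G n) := by
          rw [hki, iteratedDeriv_succ]
        have hint : IntervalIntegrable (deriv (iteratedDeriv (k - (i + 1)) (G n)))
            MeasureTheory.volume 0 x := by
          rw [hder]; exact (hGcont n).intervalIntegrable 0 x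
        have h := intervalIntegral.integral_deriv_eq_sub
          (f := iteratedDeriv (k - (i + 1)) (G n)) (a := 0) (b := x) (fun y _ => hd y) hint
        rw [hder, hG0 n _ (by omega), sub_zero] at h
        exact h.symm
      refine ⟨H, hHsm, ?_, ?_⟩
      · rw [Metric.tendstoUniformlyOn_iff]
        intro ε hε
        have h2 := (Metric.tendstoUniformlyOn_iff.mp hun) (ε / 2) (by positivity)
        filter_upwards [h2] with n hn x hx
        have hHx : H x = ∫ t in (0:ℝ)..x, h t := rfl
        rw [hrep n x hx, hHx]
        have hIf : IntervalIntegrable h MeasureTheory.volume 0 x := hhc.intervalIntegrable 0 x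
        have hIg : IntervalIntegrable (iteratedDeriv (k - i) (G n)) MeasureTheory.volume 0 x :=
          (hGcont n).intervalIntegrable 0 x
        rw [Real.dist_eq, ← intervalIntegral.integral_sub hIf hIg]
        have hb : ∀ t ∈ Set.uIoc (0:ℝ) x, ‖h t - iteratedDeriv (k - i) (G n) t‖ ≤ ε / 2 := by
          intro t ht
          have ht' : t ∈ Icc (0:ℝ) 1 := by
            rw [Set.uIoc_of_le hx.1] at ht
            exact ⟨ht.1.le, ht.2.trans hx.2⟩
          have := hn t ht'
          rw [Real.dist_eq] at this
          exact this.le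
        calc |∫ t in (0:ℝ)..x, (h t - iteratedDeriv (k - i) (G n) t)|
            ≤ ε / 2 * |x - 0| := intervalIntegral.norm_integral_le_of_norm_le_const hb
          _ ≤ ε / 2 * 1 := by
              have : |x - 0| ≤ 1 := by
                rw [sub_zero, abs_of_nonneg hx.1]; exact hx.2
              nlinarith
          _ < ε := by linarith
      · intro x hx
        rw [iteratedDeriv_succ', hHderiv]
        exact heq hx
  obtain ⟨h₀, hh₀sm, hh₀un, hh₀eq⟩ := key k le_rfl
  have hGun : TendstoUniformlyOn (fun n => G n) h₀ atTop (Icc (0:ℝ) 1) := by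
    simpa [Nat.sub_self, iteratedDeriv_zero] using hh₀un
  have hPt : ∀ x ∈ Icc (0:ℝ) 1,
      Tendsto (fun n => (P n).eval x) atTop (𝓝 (f x - h₀ x)) := by
    intro x hx
    have h1 := hconv.tendsto_at hx
    have h2 := hGun.tendsto_at hx
    have he : (fun n => (P n).eval x) = fun n => F n x - G n x := by
      funext n; rw [hGdef]; ring
    rw [he]
    exact h1.sub h2
  set v : ℕ → ℝ := fun m => (m : ℝ) / k with hv
  have hkR : (k : ℝ) ≠ 0 := Nat.cast_ne_zero.mpr hk.ne'
  have hvmem : ∀ m ∈ Finset.range k, v m ∈ Icc (0:ℝ) 1 := by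
    intro m hm
    have hmk : m < k := Finset.mem_range.mp hm
    constructor
    · positivity
    · rw [div_le_one (by positivity)]
      exact_mod_cast hmk.le
  have hvinj : Set.InjOn v (Finset.range k) := by
    intro a _ b _ hab
    have : (a : ℝ) = b := by
      have hab := (div_left_inj' hkR).mp hab
      exact_mod_cast hab
    exact_mod_cast this
  have hinterp : ∀ n, P n = Lagrange.interpolate (Finset.range k) v
      (fun m => (P n).eval (v m)) := by
    intro n
    exact Lagrange.eq_interpolate hvinj (by simpa [Finset.card_range] using hPdeg n)
  set q : ℝ[X] := Lagrange.interpolate (Finset.range k) v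
    (fun m => f (v m) - h₀ (v m)) with hq
  have hqlim : ∀ x : ℝ, Tendsto (fun n => (P n).eval x) atTop (𝓝 (q.eval x)) := by
    intro x
    have he : ∀ n, (P n).eval x = ∑ m ∈ Finset.range k,
        ((P n).eval (v m)) * (Lagrange.basis (Finset.range k) v m).eval x := by
      intro n
      conv_lhs => rw [hinterp n]
      rw [Lagrange.interpolate_apply]
      simp [Polynomial.eval_finset_sum]
    simp_rw [he]
    have hqe : q.eval x = ∑ m ∈ Finset.range k,
        (f (v m) - h₀ (v m)) * (Lagrange.basis (Finset.range k) v m).eval x := by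
      rw [hq, Lagrange.interpolate_apply]
      simp [Polynomial.eval_finset_sum]
    rw [hqe]
    exact tendsto_finset_sum _ fun m hm => (hPt (v m) (hvmem m hm)).mul_const _
  have hfeq : EqOn f (fun x => h₀ x + q.eval x) (Icc (0:ℝ) 1) := by
    intro x hx
    have := tendsto_nhds_unique (hPt x hx) (hqlim x)
    simp only
    linarith
  have hΦ : ContDiff ℝ k (fun x => h₀ x + q.eval x) := hh₀sm.add (polyContDiff q)
  have hqnat : q.natDegree < k := by
    by_cases h0 : q = 0
    · simpa [h0] using hk
    · refine (Polynomial.natDegree_lt_iff_degree_lt h0).mpr ?_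
      have := Lagrange.degree_interpolate_lt (fun m => f (v m) - h₀ (v m)) hvinj
      rw [Finset.card_range] at this
      exact_mod_cast this
  constructor
  · exact hΦ.contDiffOn.congr fun x hx => hfeq hx
  · intro x hx
    have e1 : iteratedDerivWithin k f (Icc (0:ℝ) 1) x =
        iteratedDerivWithin k (fun x => h₀ x + q.eval x) (Icc (0:ℝ) 1) x :=
      iteratedDerivWithin_congr hfeq hx
    have e2 : iteratedDerivWithin k (fun x => h₀ x + q.eval x) (Icc (0:ℝ) 1) x =
        iteratedDeriv k (fun x => h₀ x + q.eval x) x := iterWithinEq hΦ hx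
    have e3 := iterAdd k h₀ (fun x => q.eval x) hh₀sm (polyContDiff q) x
    have e4 : iteratedDeriv k (fun x => q.eval x) x = 0 := by
      rw [polyIter, Polynomial.iterate_derivative_eq_zero hqnat]
      simp
    rw [e1, e2, e3, e4, add_zero]
    exact hh₀eq hx
end

section
/- Let C be a strictly hyperbolic C^{1+γ} Cantor set with contraction bound β < 1 and bounded distortion constant K. Then for every y = (…y_{−2}y_{−1}) in the dual Cantor set Σ^− = {0,1}^{−ℕ}, the ratio-geometry vectors R_n(y) = (|I_{y_{−n}…y_{−1}0}|, |G_{y_{−n}…y_{−1}}|, |I_{y_{−n}…y_{−1}1}|)/|I_{y_{−n}…y_{−1}}| satisfy: R(y) := lim_{n→∞} R_n(y) exists, with ‖R_n(y) − R(y)‖ = O(β^{nγ}) uniformly in y; moreover R takes values in the interior of the unit simplex Δ ⊆ ℝ^3 and is Hölder continuous of exponent γ with respect to the β-metric d_β(y,w) = β^{max{n : y_{−n}…y_{−1} = w_{−n}…w_{−1}}}. -/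
open Set

/-- The nested interval `I_{w_0…w_n} = φ_{w_0}(φ_{w_1}(⋯ φ_{w_n}([0,1])))`. -/
def cyl (φ : Bool → ℝ → ℝ) : List Bool → Set ℝ
  | [] => Icc (0:ℝ) 1
  | b :: l => φ b '' cyl φ l

/-- The ratio geometry vector
`R_n(y) = (|I_{y_{-n}…y_{-1}0}|, |G_{y_{-n}…y_{-1}}|, |I_{y_{-n}…y_{-1}1}|)/|I_{y_{-n}…y_{-1}}|`,
where `y : ℕ → Bool` codes the past, `y k` being the coordinate `y_{-(k+1)}`. -/
noncomputable def ratioGeom (φ : Bool → ℝ → ℝ) (y : ℕ → Bool) (n : ℕ) : ℝ × ℝ × ℝ :=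
  let w := (List.ofFn fun i : Fin n => y i).reverse
  let T := Metric.diam (cyl φ w)
  let L := Metric.diam (cyl φ (w ++ [false]))
  let Rr := Metric.diam (cyl φ (w ++ [true]))
  (L / T, (T - L - Rr) / T, Rr / T)

namespace Stmt13Aux

/-- composition of the maps indexed by a word -/
def comp (φ : Bool → ℝ → ℝ) : List Bool → ℝ → ℝ
  | [] => id
  | b :: l => φ b ∘ comp φ l

lemma comp_append (φ : Bool → ℝ → ℝ) (w : List Bool) (b : Bool) (x : ℝ) :
    comp φ (w ++ [b]) x = comp φ w (φ b x) := by
  induction w with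
  | nil => rfl
  | cons a l ih => show φ a (comp φ (l ++ [b]) x) = _ ; rw [ih]; rfl

/-- Mean value theorem packaged for a single map. -/
lemma mvt (ψ : ℝ → ℝ) (hd : Differentiable ℝ ψ) {x z : ℝ} (hxz : x < z) :
    ∃ ξ ∈ Ioo x z, ψ z - ψ x = deriv ψ ξ * (z - x) := by
  obtain ⟨ξ, hξ, hs⟩ := exists_deriv_eq_slope ψ hxz hd.continuous.continuousOn
    (hd.differentiableOn)
  exact ⟨ξ, hξ, by rw [hs, div_mul_cancel₀ _ (by linarith : z - x ≠ 0)]⟩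

open Real

/-- The core single-step distortion estimate. -/
lemma step {α γ c : ℝ} (hα : 0 < α) (hγ : 0 < γ) (hc : 0 < c)
    (ψ : ℝ → ℝ) (hd : Differentiable ℝ ψ)
    (hdl : ∀ x ∈ Icc (0:ℝ) 1, α < deriv ψ x)
    (hH : ∀ x ∈ Icc (0:ℝ) 1, ∀ z ∈ Icc (0:ℝ) 1, |deriv ψ x - deriv ψ z| ≤ c * |x - z| ^ γ)
    {a u v b : ℝ} (ha : 0 ≤ a) (hau : a ≤ u) (huv : u ≤ v) (hvb : v ≤ b) (hb1 : b ≤ 1)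
    (hab : a < b) :
    |(ψ v - ψ u)/(ψ b - ψ a) - (v - u)/(b - a)| ≤ c/α * (b-a)^γ * ((v-u)/(b-a)) ∧
    Real.exp (-(c/α * (b-a)^γ)) * ((v-u)/(b-a)) ≤ (ψ v - ψ u)/(ψ b - ψ a) := by
  set T := c/α * (b-a)^γ with hTdef
  have hba : (0:ℝ) ≤ b - a := by linarith
  have hT0 : 0 ≤ T := by
    apply mul_nonneg (le_of_lt (div_pos hc hα)) (Real.rpow_nonneg hba γ)
  obtain ⟨η, hη, hηeq⟩ := mvt ψ hd hab
  have hηm : η ∈ Icc (0:ℝ) 1 := ⟨by linarith [hη.1], by linarith [hη.2]⟩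
  have hDη : α < deriv ψ η := hdl η hηm
  have hDηpos : 0 < deriv ψ η := lt_trans hα hDη
  have hden : 0 < ψ b - ψ a := by rw [hηeq]; exact mul_pos hDηpos (by linarith)
  rcases eq_or_lt_of_le huv with rfl | huv'
  · constructor
    · simp [sub_self]
    · simp [sub_self]
  · obtain ⟨ξ, hξ, hξeq⟩ := mvt ψ hd huv'
    have hξm : ξ ∈ Icc (0:ℝ) 1 :=
      ⟨by linarith [hξ.1], by linarith [hξ.2]⟩
    have hDξ : α < deriv ψ ξ := hdl ξ hξm
    have hDξpos : 0 < deriv ψ ξ := lt_trans hα hDξ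
    set Dξ := deriv ψ ξ
    set Dη := deriv ψ η
    have hdist : |ξ - η| ^ γ ≤ (b - a) ^ γ := by
      apply Real.rpow_le_rpow (abs_nonneg _) _ hγ.le
      rw [abs_le]
      constructor <;> [linarith [hξ.1, hξ.2, hη.1, hη.2]; linarith [hξ.1, hξ.2, hη.1, hη.2]]
    have hHol : |Dξ - Dη| ≤ c * (b-a)^γ := by
      calc |Dξ - Dη| ≤ c * |ξ - η| ^ γ := hH ξ hξm η hηm
        _ ≤ c * (b-a)^γ := by nlinarith
    have hs0 : 0 ≤ (v - u)/(b - a) := div_nonneg (by linarith) hba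
    have hkey : (ψ v - ψ u)/(ψ b - ψ a) = (Dξ/Dη) * ((v-u)/(b-a)) := by
      rw [hξeq, hηeq]
      field_simp
    constructor
    · rw [hkey]
      have : Dξ/Dη * ((v-u)/(b-a)) - (v-u)/(b-a) = (Dξ/Dη - 1) * ((v-u)/(b-a)) := by ring
      rw [this, abs_mul, abs_of_nonneg hs0]
      apply mul_le_mul_of_nonneg_right _ hs0
      have : Dξ/Dη - 1 = (Dξ - Dη)/Dη := by field_simp
      rw [this, abs_div, abs_of_pos hDηpos]
      calc |Dξ - Dη| / Dη ≤ (c * (b-a)^γ) / α := by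
            apply div_le_div₀ (by positivity) hHol hα hDη.le
        _ = T := by rw [hTdef]; ring
    · rw [hkey]
      apply mul_le_mul_of_nonneg_right _ hs0
      -- exp (-T) ≤ Dξ / Dη
      have h1 : Dη ≤ (1 + T) * Dξ := by
        have h2 : Dη - Dξ ≤ c * (b-a)^γ := le_trans (le_abs_self _) (by rwa [abs_sub_comm] at hHol)
        have h3 : c * (b-a)^γ = (c/α * (b-a)^γ) * α := by field_simp
        nlinarith
      have h4 : Dη ≤ Real.exp T * Dξ := by
        have := Real.add_one_le_exp T
        nlinarith
      rw [le_div_iff₀ hDηpos, Real.exp_neg]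
      calc (Real.exp T)⁻¹ * Dη ≤ (Real.exp T)⁻¹ * (Real.exp T * Dξ) := by
            apply mul_le_mul_of_nonneg_left h4 (by positivity)
        _ = Dξ := by field_simp

lemma pow_rpow_comm {β γ : ℝ} (hβ : 0 ≤ β) (n : ℕ) : (β ^ n) ^ γ = (β ^ γ) ^ n := by
  rw [← Real.rpow_natCast β n, ← Real.rpow_natCast (β ^ γ) n, ← Real.rpow_mul hβ,
    ← Real.rpow_mul hβ, mul_comm]

section CompFacts

variable {φ : Bool → ℝ → ℝ}

lemma comp_mapsTo (hφmaps : ∀ b, MapsTo (φ b) (Icc (0:ℝ) 1) (Icc (0:ℝ) 1)) :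
    ∀ w, MapsTo (comp φ w) (Icc (0:ℝ) 1) (Icc (0:ℝ) 1)
  | [] => fun x hx => hx
  | b :: l => fun x hx => hφmaps b (comp_mapsTo hφmaps l hx)

lemma comp_strictMono (hφmaps : ∀ b, MapsTo (φ b) (Icc (0:ℝ) 1) (Icc (0:ℝ) 1))
    (hsm : ∀ b, StrictMonoOn (φ b) (Icc (0:ℝ) 1)) :
    ∀ w, StrictMonoOn (comp φ w) (Icc (0:ℝ) 1)
  | [] => fun x _ y _ hxy => hxy
  | b :: l => fun x hx y hy hxy =>
      hsm b (comp_mapsTo hφmaps l hx) (comp_mapsTo hφmaps l hy)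
        (comp_strictMono hφmaps hsm l hx hy hxy)

lemma cyl_eq (hφmaps : ∀ b, MapsTo (φ b) (Icc (0:ℝ) 1) (Icc (0:ℝ) 1))
    (hsm : ∀ b, StrictMonoOn (φ b) (Icc (0:ℝ) 1))
    (hcont : ∀ b, Continuous (φ b)) :
    ∀ w, cyl φ w = Icc (comp φ w 0) (comp φ w 1) := by
  intro w
  induction w with
  | nil => simp [cyl, comp]
  | cons b l ih =>
    have h0 : (0:ℝ) ∈ Icc (0:ℝ) 1 := ⟨le_refl 0, zero_le_one⟩
    have h1 : (1:ℝ) ∈ Icc (0:ℝ) 1 := ⟨zero_le_one, le_refl 1⟩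
    have hc0 : comp φ l 0 ∈ Icc (0:ℝ) 1 := comp_mapsTo hφmaps l h0
    have hc1 : comp φ l 1 ∈ Icc (0:ℝ) 1 := comp_mapsTo hφmaps l h1
    have hle : comp φ l 0 ≤ comp φ l 1 :=
      ((comp_strictMono hφmaps hsm l) h0 h1 zero_lt_one).le
    show φ b '' cyl φ l = _
    rw [ih]
    apply Subset.antisymm
    · rintro _ ⟨x, hx, rfl⟩
      have hxm : x ∈ Icc (0:ℝ) 1 := ⟨le_trans hc0.1 hx.1, le_trans hx.2 hc1.2⟩
      exact ⟨(hsm b).monotoneOn hc0 hxm hx.1, (hsm b).monotoneOn hxm hc1 hx.2⟩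
    · exact intermediate_value_Icc hle (hcont b).continuousOn

end CompFacts

end Stmt13Aux

open Stmt13Aux

/-- Sullivan's scaling function theorem for a strictly hyperbolic `C^{1+γ}` Cantor set. -/
theorem stmt13 (φ : Bool → ℝ → ℝ) (α β γ c : ℝ)
    (hα : 0 < α) (hβ : β < 1) (hγ : 0 < γ) (hγ1 : γ ≤ 1) (hc : 0 < c)
    (hφdiff : ∀ b, ContDiff ℝ 1 (φ b))
    (hφmaps : ∀ b, MapsTo (φ b) (Icc (0:ℝ) 1) (Icc (0:ℝ) 1))
    (hderiv : ∀ b, ∀ x ∈ Icc (0:ℝ) 1, α < deriv (φ b) x ∧ deriv (φ b) x < β)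
    (hHolder : ∀ b, ∀ x ∈ Icc (0:ℝ) 1, ∀ z ∈ Icc (0:ℝ) 1,
      |deriv (φ b) x - deriv (φ b) z| ≤ c * |x - z| ^ γ)
    (h00 : φ false 0 = 0) (h11 : φ true 1 = 1)
    (hgap : φ false 1 < φ true 0) :
    ∃ R : (ℕ → Bool) → ℝ × ℝ × ℝ, ∃ Cst : ℝ, 0 < Cst ∧
      -- convergence `R_n(y) → R(y)` at rate `O(β^{nγ})`, uniformly in `y`
      (∀ (y : ℕ → Bool) (n : ℕ), ‖ratioGeom φ y n - R y‖ ≤ Cst * (β ^ γ) ^ n) ∧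
      -- `R` takes values in the interior of the unit simplex
      (∀ y : ℕ → Bool, 0 < (R y).1 ∧ 0 < (R y).2.1 ∧ 0 < (R y).2.2 ∧
        (R y).1 + (R y).2.1 + (R y).2.2 = 1) ∧
      -- `R` is Hölder of exponent `γ` in the `β`-metric: if `y, w` agree in the
      -- `n` most recent past coordinates then `‖R y − R w‖ ≤ Cst (β^n)^γ`
      (∀ (y w : ℕ → Bool) (n : ℕ), (∀ i < n, y i = w i) →
        ‖R y - R w‖ ≤ Cst * ((β ^ n) ^ γ)) := by
  -- membership helpers
  have h0m : (0:ℝ) ∈ Icc (0:ℝ) 1 := ⟨le_refl 0, zero_le_one⟩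
  have h1m : (1:ℝ) ∈ Icc (0:ℝ) 1 := ⟨zero_le_one, le_refl 1⟩
  -- basic constants
  have hαβ : α < β := lt_trans (hderiv false 0 h0m).1 (hderiv false 0 h0m).2
  have hβ0 : 0 < β := lt_trans hα hαβ
  set q : ℝ := β ^ γ with hqdef
  have hq0 : 0 < q := Real.rpow_pos_of_pos hβ0 γ
  have hq1 : q < 1 := Real.rpow_lt_one hβ0.le hβ hγ
  set K0 : ℝ := c / α with hK0def
  have hK0 : 0 < K0 := div_pos hc hα
  set C1 : ℝ := K0 / (1 - q) with hC1def
  have hC1 : 0 < C1 := div_pos hK0 (by linarith)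
  -- per-map facts
  have hdiff : ∀ b, Differentiable ℝ (φ b) := fun b => (hφdiff b).differentiable one_ne_zero
  have hcont : ∀ b, Continuous (φ b) := fun b => (hdiff b).continuous
  have hsm : ∀ b, StrictMonoOn (φ b) (Icc (0:ℝ) 1) := by
    intro b
    apply strictMonoOn_of_deriv_pos (convex_Icc 0 1) (hcont b).continuousOn
    intro x hx
    rw [interior_Icc] at hx
    exact lt_trans hα (hderiv b x ⟨hx.1.le, hx.2.le⟩).1
  have hcontr : ∀ b, ∀ x ∈ Icc (0:ℝ) 1, ∀ z ∈ Icc (0:ℝ) 1, x ≤ z →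
      φ b z - φ b x ≤ β * (z - x) := by
    intro b x hx z hz hxz
    rcases eq_or_lt_of_le hxz with rfl | hlt
    · simp
    · obtain ⟨ξ, hξ, hξeq⟩ := mvt (φ b) (hdiff b) hlt
      have hξm : ξ ∈ Icc (0:ℝ) 1 := ⟨by linarith [hξ.1, hx.1], by linarith [hξ.2, hz.2]⟩
      rw [hξeq]
      have := (hderiv b ξ hξm).2
      nlinarith
  -- key per-y facts
  set p0 : ℝ := φ false 1 with hp0def
  set q0 : ℝ := φ true 0 with hq0def
  have hp0pos : 0 < p0 := by
    have := hsm false h0m h1m zero_lt_one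
    rwa [h00] at this
  have hq0lt : q0 < 1 := by
    have := hsm true h0m h1m zero_lt_one
    rwa [h11] at this
  have hp0m : p0 ∈ Icc (0:ℝ) 1 := hφmaps false h1m
  have hq0m : q0 ∈ Icc (0:ℝ) 1 := hφmaps true h0m
  set E : ℝ := Real.exp (-(K0 / (1 - q))) with hEdef
  have hE : 0 < E := Real.exp_pos _
  set m1 : ℝ := E * p0 with hm1def
  set m2 : ℝ := E * (q0 - p0) with hm2def
  set m3 : ℝ := E * (1 - q0) with hm3def
  have hm1 : 0 < m1 := mul_pos hE hp0pos
  have hm2 : 0 < m2 := mul_pos hE (by linarith)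
  have hm3 : 0 < m3 := mul_pos hE (by linarith)
  -- geometric sum bound
  have hS : ∀ n : ℕ, (∑ k ∈ Finset.range n, q ^ k) ≤ 1 / (1 - q) := by
    intro n
    rw [geom_sum_eq hq1.ne n]
    rw [show (q ^ n - 1)/(q - 1) = (1 - q ^ n)/(1 - q) by
      rw [← neg_sub 1 (q ^ n), ← neg_sub 1 q, neg_div_neg_eq]]
    have h1q : (0:ℝ) < 1 - q := by linarith
    have hqn : 0 ≤ q ^ n := le_of_lt (pow_pos hq0 n)
    gcongr
    linarith
  have key : ∀ (y : ℕ → Bool) (n : ℕ),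
      dist (ratioGeom φ y n) (ratioGeom φ y (n+1)) ≤ K0 * q ^ n ∧
      (m1 ≤ (ratioGeom φ y n).1 ∧ m2 ≤ (ratioGeom φ y n).2.1 ∧ m3 ≤ (ratioGeom φ y n).2.2) ∧
      (ratioGeom φ y n).1 + (ratioGeom φ y n).2.1 + (ratioGeom φ y n).2.2 = 1 := by
    intro y
    set g : ℕ → ℝ → ℝ := fun n => comp φ ((List.ofFn fun i : Fin n => y i).reverse) with hgdef
    have hword : ∀ n, ((List.ofFn fun i : Fin (n+1) => y i).reverse)
        = y n :: (List.ofFn fun i : Fin n => y i).reverse := by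
      intro n
      rw [List.ofFn_succ' (fun i : Fin (n+1) => y i)]
      simp [List.concat_eq_append, List.reverse_append]
    have hgsucc : ∀ n x, g (n+1) x = φ (y n) (g n x) := by
      intro n x
      show comp φ _ x = _
      rw [hword n]
      rfl
    have hg0 : ∀ x, g 0 x = x := fun x => rfl
    -- basic pointwise facts about g n
    have hgmaps : ∀ n, MapsTo (g n) (Icc (0:ℝ) 1) (Icc (0:ℝ) 1) :=
      fun n => comp_mapsTo hφmaps _
    have hgsm : ∀ n, StrictMonoOn (g n) (Icc (0:ℝ) 1) :=
      fun n => comp_strictMono hφmaps hsm _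
    have hcontract : ∀ n, g n 1 - g n 0 ≤ β ^ n := by
      intro n
      induction n with
      | zero => simp [hg0]
      | succ n ih =>
        rw [hgsucc, hgsucc]
        calc φ (y n) (g n 1) - φ (y n) (g n 0)
            ≤ β * (g n 1 - g n 0) :=
              hcontr (y n) _ (hgmaps n h0m) _ (hgmaps n h1m) ((hgsm n h0m h1m zero_lt_one).le)
          _ ≤ β * β ^ n := by nlinarith
          _ = β ^ (n+1) := by ring
    have hgAB : ∀ n, g n 0 < g n 1 := fun n => hgsm n h0m h1m zero_lt_one
    -- the ratio geometry in terms of g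
    have hrg : ∀ n, ratioGeom φ y n =
        ((g n p0 - g n 0)/(g n 1 - g n 0), (g n q0 - g n p0)/(g n 1 - g n 0),
         (g n 1 - g n q0)/(g n 1 - g n 0)) := by
      intro n
      have hcyl := cyl_eq hφmaps hsm hcont
      have hP : g n 0 ≤ g n p0 := (hgsm n).monotoneOn h0m hp0m hp0m.1
      have hQ : g n q0 ≤ g n 1 := (hgsm n).monotoneOn hq0m h1m hq0m.2
      have hPQ : g n p0 ≤ g n q0 := (hgsm n).monotoneOn hp0m hq0m hgap.le
      have hT : Metric.diam (cyl φ ((List.ofFn fun i : Fin n => y i).reverse))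
          = g n 1 - g n 0 := by
        rw [hcyl, Real.diam_Icc (hgAB n).le]
      have hL : Metric.diam (cyl φ (((List.ofFn fun i : Fin n => y i).reverse) ++ [false]))
          = g n p0 - g n 0 := by
        rw [hcyl, comp_append, comp_append, h00, Real.diam_Icc hP]
      have hR : Metric.diam (cyl φ (((List.ofFn fun i : Fin n => y i).reverse) ++ [true]))
          = g n 1 - g n q0 := by
        rw [hcyl, comp_append, comp_append, h11, Real.diam_Icc hQ]
      show (_, _, _) = (_, _, _)
      rw [hT, hL, hR]
      refine Prod.ext rfl (Prod.ext ?_ rfl)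
      show ((g n 1 - g n 0) - (g n p0 - g n 0) - (g n 1 - g n q0))/(g n 1 - g n 0) = _
      rw [show (g n 1 - g n 0) - (g n p0 - g n 0) - (g n 1 - g n q0) = g n q0 - g n p0 by ring]
    -- the one-step distortion estimate for a generic pair of marked points
    have hpow : ∀ n, (g n 1 - g n 0) ^ γ ≤ q ^ n := by
      intro n
      calc (g n 1 - g n 0) ^ γ ≤ (β ^ n) ^ γ :=
            Real.rpow_le_rpow (by linarith [hgAB n]) (hcontract n) hγ.le
        _ = q ^ n := pow_rpow_comm hβ0.le n
    have hfact : ∀ (s t : ℝ), 0 ≤ s → s ≤ t → t ≤ 1 → ∀ n,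
        |(g (n+1) t - g (n+1) s)/(g (n+1) 1 - g (n+1) 0) -
          (g n t - g n s)/(g n 1 - g n 0)| ≤ K0 * q ^ n ∧
        Real.exp (-(K0 * q ^ n)) * ((g n t - g n s)/(g n 1 - g n 0)) ≤
          (g (n+1) t - g (n+1) s)/(g (n+1) 1 - g (n+1) 0) := by
      intro s t hs hst ht1 n
      have hsm' : s ∈ Icc (0:ℝ) 1 := ⟨hs, le_trans hst ht1⟩
      have htm' : t ∈ Icc (0:ℝ) 1 := ⟨le_trans hs hst, ht1⟩
      have h1 : 0 ≤ g n 0 := (hgmaps n h0m).1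
      have h2 : g n 0 ≤ g n s := (hgsm n).monotoneOn h0m hsm' hs
      have h3 : g n s ≤ g n t := (hgsm n).monotoneOn hsm' htm' hst
      have h4 : g n t ≤ g n 1 := (hgsm n).monotoneOn htm' h1m ht1
      have h5 : g n 1 ≤ 1 := (hgmaps n h1m).2
      have hst' := step hα hγ hc (φ (y n)) (hdiff (y n))
        (fun x hx => (hderiv (y n) x hx).1) (hHolder (y n))
        h1 h2 h3 h4 h5 (hgAB n)
      have hb : 0 < g n 1 - g n 0 := by linarith [hgAB n]
      have hratR : 0 ≤ (g n t - g n s)/(g n 1 - g n 0) :=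
        div_nonneg (by linarith) hb.le
      have hratL : (g n t - g n s)/(g n 1 - g n 0) ≤ 1 := by
        rw [div_le_one hb]; linarith
      have hKq : K0 * (g n 1 - g n 0) ^ γ ≤ K0 * q ^ n :=
        mul_le_mul_of_nonneg_left (hpow n) hK0.le
      constructor
      · rw [hgsucc, hgsucc, hgsucc, hgsucc]
        calc |(φ (y n) (g n t) - φ (y n) (g n s))/(φ (y n) (g n 1) - φ (y n) (g n 0))
              - (g n t - g n s)/(g n 1 - g n 0)|
            ≤ c/α * (g n 1 - g n 0)^γ * ((g n t - g n s)/(g n 1 - g n 0)) := hst'.1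
          _ ≤ K0 * q ^ n * 1 := by
              apply mul_le_mul _ hratL hratR (by positivity)
              rw [hK0def] at hKq ⊢
              exact hKq
          _ = K0 * q ^ n := by ring
      · rw [hgsucc, hgsucc, hgsucc, hgsucc]
        refine le_trans ?_ hst'.2
        apply mul_le_mul_of_nonneg_right _ hratR
        apply Real.exp_le_exp.2
        rw [hK0def] at hKq
        simp only [neg_le_neg_iff]
        exact hKq
    -- the lower bound by induction
    have hlow : ∀ (s t : ℝ), 0 ≤ s → s ≤ t → t ≤ 1 → ∀ n,
        Real.exp (-(K0 / (1 - q))) * ((t - s)/1) ≤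
          (g n t - g n s)/(g n 1 - g n 0) := by
      intro s t hs hst ht1 n
      have hind : ∀ n, Real.exp (-(K0 * ∑ k ∈ Finset.range n, q ^ k)) * ((t - s)/1) ≤
          (g n t - g n s)/(g n 1 - g n 0) := by
        intro n
        induction n with
        | zero => simp [hg0]
        | succ n ih =>
          calc Real.exp (-(K0 * ∑ k ∈ Finset.range (n+1), q ^ k)) * ((t - s)/1)
              = Real.exp (-(K0 * q^n)) *
                (Real.exp (-(K0 * ∑ k ∈ Finset.range n, q ^ k)) * ((t - s)/1)) := by
                rw [← mul_assoc, ← Real.exp_add,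
                  show -(K0 * q^n) + -(K0 * ∑ k ∈ Finset.range n, q ^ k)
                    = -(K0 * ∑ k ∈ Finset.range (n+1), q ^ k) by
                      rw [Finset.sum_range_succ]; ring]
            _ ≤ Real.exp (-(K0 * q^n)) * ((g n t - g n s)/(g n 1 - g n 0)) := by
                apply mul_le_mul_of_nonneg_left ih (Real.exp_pos _).le
            _ ≤ (g (n+1) t - g (n+1) s)/(g (n+1) 1 - g (n+1) 0) :=
                (hfact s t hs hst ht1 n).2
      refine le_trans ?_ (hind n)
      apply mul_le_mul_of_nonneg_right _ (div_nonneg (by linarith) zero_le_one)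
      apply Real.exp_le_exp.2
      simp only [neg_le_neg_iff]
      calc K0 * ∑ k ∈ Finset.range n, q ^ k ≤ K0 * (1/(1-q)) :=
            mul_le_mul_of_nonneg_left (hS n) hK0.le
        _ = K0 / (1 - q) := by ring
    -- assemble
    intro n
    have hb : ∀ m, (0:ℝ) < g m 1 - g m 0 := fun m => by linarith [hgAB m]
    refine ⟨?_, ⟨?_, ?_, ?_⟩, ?_⟩
    · rw [hrg n, hrg (n+1)]
      rw [Prod.dist_eq, Prod.dist_eq]
      have d1 := (hfact 0 p0 le_rfl hp0m.1 hp0m.2 n).1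
      have d2 := (hfact p0 q0 hp0m.1 hgap.le hq0m.2 n).1
      have d3 := (hfact q0 1 hq0m.1 hq0m.2 le_rfl n).1
      rw [abs_sub_comm] at d1 d2 d3
      simp only [Real.dist_eq]
      apply max_le
      · exact d1
      · exact max_le d2 d3
    · rw [hrg n]
      have := hlow 0 p0 le_rfl hp0m.1 hp0m.2 n
      simpa [hm1def, hEdef] using this
    · rw [hrg n]
      have := hlow p0 q0 hp0m.1 hgap.le hq0m.2 n
      simpa [hm2def, hEdef] using this
    · rw [hrg n]
      have := hlow q0 1 hq0m.1 hq0m.2 le_rfl n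
      simpa [hm3def, hEdef] using this
    · rw [hrg n]
      have := hb n
      show (g n p0 - g n 0)/(g n 1 - g n 0) + (g n q0 - g n p0)/(g n 1 - g n 0)
          + (g n 1 - g n q0)/(g n 1 - g n 0) = 1
      field_simp
      ring
  -- Cauchy sequences and limits
  have hcau : ∀ y : ℕ → Bool, CauchySeq (ratioGeom φ y) := by
    intro y
    exact cauchySeq_of_le_geometric q K0 hq1 (fun n => (key y n).1)
  have hlim : ∀ y : ℕ → Bool, ∃ L, Filter.Tendsto (ratioGeom φ y) Filter.atTop (nhds L) :=
    fun y => cauchySeq_tendsto_of_complete (hcau y)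
  choose R hR using hlim
  have hdistR : ∀ (y : ℕ → Bool) (n : ℕ), dist (ratioGeom φ y n) (R y) ≤ C1 * q ^ n := by
    intro y n
    have := dist_le_of_le_geometric_of_tendsto q K0 hq1 (fun n => (key y n).1) (hR y) n
    calc dist (ratioGeom φ y n) (R y) ≤ K0 * q ^ n / (1 - q) := this
      _ = C1 * q ^ n := by rw [hC1def]; ring
  refine ⟨R, 2 * C1 + 1, by linarith, ?_, ?_, ?_⟩
  · -- convergence bound
    intro y n
    rw [← dist_eq_norm]
    calc dist (ratioGeom φ y n) (R y) ≤ C1 * q ^ n := hdistR y n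
      _ ≤ (2 * C1 + 1) * q ^ n := by
          apply mul_le_mul_of_nonneg_right (by linarith) (le_of_lt (pow_pos hq0 n))
  · -- values in the open simplex
    intro y
    have h1 : Filter.Tendsto (fun n => (ratioGeom φ y n).1) Filter.atTop (nhds (R y).1) :=
      (continuous_fst.tendsto _).comp (hR y)
    have h2 : Filter.Tendsto (fun n => (ratioGeom φ y n).2.1) Filter.atTop (nhds (R y).2.1) :=
      ((continuous_fst.comp continuous_snd).tendsto _).comp (hR y)
    have h3 : Filter.Tendsto (fun n => (ratioGeom φ y n).2.2) Filter.atTop (nhds (R y).2.2) :=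
      ((continuous_snd.comp continuous_snd).tendsto _).comp (hR y)
    refine ⟨lt_of_lt_of_le hm1 ?_, lt_of_lt_of_le hm2 ?_, lt_of_lt_of_le hm3 ?_, ?_⟩
    · exact ge_of_tendsto' h1 (fun n => (key y n).2.1.1)
    · exact ge_of_tendsto' h2 (fun n => (key y n).2.1.2.1)
    · exact ge_of_tendsto' h3 (fun n => (key y n).2.1.2.2)
    · have hsum : Filter.Tendsto
          (fun n => (ratioGeom φ y n).1 + (ratioGeom φ y n).2.1 + (ratioGeom φ y n).2.2)
          Filter.atTop (nhds ((R y).1 + (R y).2.1 + (R y).2.2)) := (h1.add h2).add h3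
      have hconst : (fun n => (ratioGeom φ y n).1 + (ratioGeom φ y n).2.1
          + (ratioGeom φ y n).2.2) = fun _ => (1:ℝ) := funext fun n => (key y n).2.2
      rw [hconst] at hsum
      exact tendsto_nhds_unique hsum tendsto_const_nhds
  · -- Hölder continuity
    intro y w n hagree
    have hfun : (fun i : Fin n => y i) = fun i : Fin n => w i :=
      funext fun i => hagree i i.2
    have heq : ratioGeom φ y n = ratioGeom φ w n := by
      unfold ratioGeom
      rw [hfun]
    have hqq : (β ^ n) ^ γ = q ^ n := pow_rpow_comm hβ0.le n
    rw [hqq]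
    calc ‖R y - R w‖ = dist (R y) (R w) := (dist_eq_norm _ _).symm
      _ ≤ dist (R y) (ratioGeom φ y n) + dist (ratioGeom φ y n) (R w) := dist_triangle _ _ _
      _ = dist (ratioGeom φ y n) (R y) + dist (ratioGeom φ w n) (R w) := by
          rw [dist_comm, heq]
      _ ≤ C1 * q ^ n + C1 * q ^ n := add_le_add (hdistR y n) (hdistR w n)
      _ ≤ (2 * C1 + 1) * q ^ n := by
          have : (0:ℝ) ≤ q ^ n := le_of_lt (pow_pos hq0 n)
          nlinarith
end
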